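/- arXiv:2007.07134 — 3 statements merged into one kernel-verified Lean document; each statement's English description precedes it below -/
import Mathlib

section
/- Let Φ be Schur stable with √γ·Φ Schur stable for γ ∈ (0,1), Ω ⪰ 0, and define X_0 = 0 and X_i = ∑_{j=0}^{i-1} Φ^j Ω (Φᵀ)^j for i ≥ 1. Let P̃ solve P̃ = γ Φᵀ P̃ Φ + Cᵀ C. Then ∑_{i=0}^∞ γ^i tr(Cᵀ C X_i) = (γ/(1−γ)) tr(Ω P̃). -/
open Matrix Filter

private lemma psd_trace_nonneg {n : ℕ} {M : Matrix (Fin n) (Fin n) ℝ}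
    (hM : M.PosSemidef) : 0 ≤ M.trace := by
  rw [Matrix.trace]
  refine Finset.sum_nonneg fun i _ => ?_
  simpa [Matrix.diag] using hM.2 (Finsupp.single i 1)

/-- With `Φ` Schur stable and `√γ·Φ` Schur stable, `Ω ⪰ 0`,
`X_0 = 0`, `X_i = ∑_{j<i} Φ^j Ω (Φᵀ)^j`, and `P̃` solving `P̃ = γ Φᵀ P̃ Φ + Cᵀ C`,
we have `∑_{i=0}^∞ γ^i tr(Cᵀ C X_i) = (γ/(1−γ)) tr(Ω P̃)`. -/
theorem stmt1 {n m : ℕ} (Φ : Matrix (Fin n) (Fin n) ℝ) (C : Matrix (Fin m) (Fin n) ℝ)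
    (Ω : Matrix (Fin n) (Fin n) ℝ) (hΩ : Ω.PosSemidef)
    (γ : ℝ) (hγ : γ ∈ Set.Ioo (0 : ℝ) 1)
    (hstabΦ : Tendsto (fun i : ℕ => Φ ^ i) atTop (nhds 0))
    (hstab : Tendsto (fun i : ℕ => (Real.sqrt γ • Φ) ^ i) atTop (nhds 0))
    (X : ℕ → Matrix (Fin n) (Fin n) ℝ)
    (hX : ∀ i : ℕ, X i = ∑ j ∈ Finset.range i, Φ ^ j * Ω * (Φᵀ) ^ j)
    (P : Matrix (Fin n) (Fin n) ℝ)
    (hP : P = γ • (Φᵀ * P * Φ) + Cᵀ * C) :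
    ∑' i : ℕ, γ ^ i * (Cᵀ * C * X i).trace = γ / (1 - γ) * (Ω * P).trace := by
  obtain ⟨hγ0, hγ1⟩ := hγ
  set t : ℕ → ℝ := fun j => γ ^ j * ((Φᵀ) ^ j * (Cᵀ * C) * Φ ^ j * Ω).trace with ht
  -- nonnegativity of t
  have htnn : ∀ j, 0 ≤ t j := by
    intro j
    refine mul_nonneg (pow_nonneg hγ0.le _) ?_
    have h1 : (Φᵀ) ^ j * (Cᵀ * C) * Φ ^ j * Ω = (C * Φ ^ j)ᵀ * ((C * Φ ^ j) * Ω) := by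
      simp [Matrix.transpose_mul, Matrix.transpose_pow, Matrix.mul_assoc]
    rw [h1, Matrix.trace_mul_comm]
    have := (hΩ.mul_mul_conjTranspose_same (C * Φ ^ j))
    rw [Matrix.conjTranspose_eq_transpose_of_trivial] at this
    exact psd_trace_nonneg (by simpa [Matrix.mul_assoc] using this)
  -- substitution identity
  have hsub : ∀ k : ℕ, (Φᵀ) ^ k * P * Φ ^ k
      = γ • ((Φᵀ) ^ (k + 1) * P * Φ ^ (k + 1)) + (Φᵀ) ^ k * (Cᵀ * C) * Φ ^ k := by
    intro k
    conv_lhs => rw [hP]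
    rw [pow_succ, pow_succ']
    simp only [Matrix.mul_add, Matrix.add_mul, mul_smul_comm, smul_mul_assoc, Matrix.mul_assoc]
  -- partial sums identity
  have key : ∀ k : ℕ, (Ω * P).trace
      = (∑ j ∈ Finset.range k, t j) + γ ^ k * (((Φᵀ) ^ k * P * Φ ^ k) * Ω).trace := by
    intro k
    induction k with
    | zero => simp [Matrix.trace_mul_comm Ω P]
    | succ k ih =>
      rw [ih, Finset.sum_range_succ]
      have : γ ^ k * (((Φᵀ) ^ k * P * Φ ^ k) * Ω).trace
          = t k + γ ^ (k + 1) * (((Φᵀ) ^ (k + 1) * P * Φ ^ (k + 1)) * Ω).trace := by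
        rw [ht]
        conv_lhs => rw [hsub k]
        rw [Matrix.add_mul, Matrix.trace_add, Matrix.smul_mul, Matrix.trace_smul]
        simp only [smul_eq_mul]
        ring
      rw [this]; ring
  -- the remainder tends to zero
  have hrem : Tendsto (fun k : ℕ => γ ^ k * (((Φᵀ) ^ k * P * Φ ^ k) * Ω).trace) atTop (nhds 0) := by
    have heq : ∀ k : ℕ, γ ^ k * (((Φᵀ) ^ k * P * Φ ^ k) * Ω).trace
        = (((((Real.sqrt γ • Φ) ^ k)ᵀ * P * (Real.sqrt γ • Φ) ^ k) * Ω)).trace := by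
      intro k
      rw [smul_pow, Matrix.transpose_smul, Matrix.transpose_pow]
      simp only [Matrix.smul_mul, Matrix.mul_smul, Matrix.trace_smul, smul_eq_mul]
      have h2 : Real.sqrt γ ^ k * Real.sqrt γ ^ k = γ ^ k := by
        rw [← mul_pow, Real.mul_self_sqrt hγ0.le]
      rw [← h2]; ring
    have hcont : Continuous fun A : Matrix (Fin n) (Fin n) ℝ => ((Aᵀ * P * A) * Ω).trace :=
      (((continuous_id.matrix_transpose.matrix_mul continuous_const).matrix_mul
        continuous_id).matrix_mul continuous_const).matrix_trace
    have htt : Tendsto (fun k : ℕ => ((((Real.sqrt γ • Φ) ^ k)ᵀ * P * (Real.sqrt γ • Φ) ^ k) * Ω).trace)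
        atTop (nhds 0) := by
      have := (hcont.tendsto 0).comp hstab
      simp only [Function.comp_def] at this
      simpa using this
    exact Filter.Tendsto.congr (fun k => (heq k).symm) htt
  -- partial sums of t tend to (Ω*P).trace
  have hstend : Tendsto (fun k => ∑ j ∈ Finset.range k, t j) atTop (nhds ((Ω * P).trace)) := by
    have : (fun k => ∑ j ∈ Finset.range k, t j)
        = fun k => (Ω * P).trace - γ ^ k * (((Φᵀ) ^ k * P * Φ ^ k) * Ω).trace := by
      funext k; rw [key k]; ring
    rw [this]
    simpa using tendsto_const_nhds.sub hrem
  have hmono : Monotone fun k => ∑ j ∈ Finset.range k, t j :=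
    monotone_nat_of_le_succ fun k => by
      rw [Finset.sum_range_succ]; linarith [htnn k]
  have htsummable : Summable t := by
    refine summable_of_sum_range_le (c := (Ω * P).trace) htnn fun k => ?_
    exact ge_of_tendsto hstend (Filter.eventually_atTop.2 ⟨k, fun m hm => hmono hm⟩)
  have htsum : ∑' j, t j = (Ω * P).trace :=
    tendsto_nhds_unique htsummable.hasSum.tendsto_sum_nat hstend
  -- the geometric-tail sequence
  set c : ℕ → ℝ := fun d => if d = 0 then 0 else γ ^ d with hc
  have hcnn : ∀ d, 0 ≤ c d := fun d => by
    by_cases h : d = 0 <;> simp [hc, h, pow_nonneg hγ0.le]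
  have hcle : ∀ d, c d ≤ γ ^ d := fun d => by
    by_cases h : d = 0 <;> simp [hc, h]
  have hcsummable : Summable c :=
    Summable.of_nonneg_of_le hcnn hcle (summable_geometric_of_lt_one hγ0.le hγ1)
  have hcsum : ∑' d, c d = γ / (1 - γ) := by
    rw [Summable.tsum_eq_zero_add hcsummable]
    simp only [hc, if_pos rfl, zero_add]
    have : (fun d : ℕ => if d + 1 = 0 then (0:ℝ) else γ ^ (d + 1)) = fun d => γ * γ ^ d := by
      funext d; simp [pow_succ]; ring
    rw [this, tsum_mul_left, tsum_geometric_of_lt_one hγ0.le hγ1]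
    rw [div_eq_mul_inv]
  -- identify the LHS terms as a Cauchy product
  have hterm : ∀ i : ℕ, γ ^ i * (Cᵀ * C * X i).trace
      = ∑ k ∈ Finset.range (i + 1), t k * c (i - k) := by
    intro i
    rw [Finset.sum_range_succ]
    simp only [Nat.sub_self, hc, if_pos rfl, mul_zero, add_zero]
    rw [hX i, Finset.mul_sum, Matrix.trace_sum, Finset.mul_sum]
    refine Finset.sum_congr rfl fun j hj => ?_
    have hji : j < i := Finset.mem_range.1 hj
    have hjne : i - j ≠ 0 := Nat.sub_ne_zero_of_lt hji
    rw [ht]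
    simp only [hc, if_neg hjne]
    have htr : (Cᵀ * C * (Φ ^ j * Ω * (Φᵀ) ^ j)).trace
        = ((Φᵀ) ^ j * (Cᵀ * C) * Φ ^ j * Ω).trace := by
      rw [show Cᵀ * C * (Φ ^ j * Ω * (Φᵀ) ^ j) = (Cᵀ * C * (Φ ^ j * Ω)) * (Φᵀ) ^ j by
        simp [Matrix.mul_assoc]]
      rw [Matrix.trace_mul_comm]
      simp [Matrix.mul_assoc]
    rw [htr]
    have : γ ^ j * γ ^ (i - j) = γ ^ i := by
      rw [← pow_add]
      congr 1
      omega
    rw [← this]; ring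
  -- conclude via the Cauchy product formula
  calc ∑' i : ℕ, γ ^ i * (Cᵀ * C * X i).trace
      = ∑' i : ℕ, ∑ k ∈ Finset.range (i + 1), t k * c (i - k) := tsum_congr hterm
    _ = (∑' j, t j) * ∑' d, c d := by
        rw [← tsum_mul_tsum_eq_tsum_sum_range_of_summable_norm]
        · exact htsummable.congr fun j => (Real.norm_of_nonneg (htnn j)).symm
        · exact hcsummable.congr fun d => (Real.norm_of_nonneg (hcnn d)).symm
    _ = γ / (1 - γ) * (Ω * P).trace := by rw [htsum, hcsum]; ring
end

section
/- Suppose for each μ ∈ (0,1], P̄(μ) ⪰ 0 and P̂(μ) ⪰ 0 are matrices such that for every positive semidefinite Z and all μ₁, μ₂ ∈ (0,1]: tr(Z((1−μ₁)P̄(μ₁) + μ₁P̂(μ₁))) ≤ tr(Z((1−μ₁)P̄(μ₂) + μ₁P̂(μ₂))) (optimality of the pair at μ₁ for the μ₁-weighted objective). Then for 0 < μ₁ ≤ μ₂ ≤ 1 one has P̄(μ₁) ⪯ P̄(μ₂) and P̂(μ₁) ⪰ P̂(μ₂). -/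
open Matrix

lemma psd_vmv {n : ℕ} (x : Fin n → ℝ) : (vecMulVec x x).PosSemidef := by
  rw [posSemidef_iff_dotProduct_mulVec]
  constructor
  · ext i j; simp [vecMulVec, conjTranspose, mul_comm]
  · intro y
    have : (star y) ⬝ᵥ (vecMulVec x x *ᵥ y) = (x ⬝ᵥ y) * (x ⬝ᵥ y) := by
      simp [vecMulVec, dotProduct, mulVec, Finset.mul_sum, Finset.sum_mul]
      rw [Finset.sum_comm]
      congr 1; ext i; congr 1; ext j; ring
    rw [this]; exact mul_self_nonneg _

lemma trace_vmv {n : ℕ} (x : Fin n → ℝ) (M : Matrix (Fin n) (Fin n) ℝ) :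
    (vecMulVec x x * M).trace = x ⬝ᵥ (M *ᵥ x) := by
  simp [trace, Matrix.mul_apply, vecMulVec, dotProduct, mulVec, Finset.mul_sum, diag]
  rw [Finset.sum_comm]
  congr 1; ext i; congr 1; ext j; ring

lemma psd_of_trace {n : ℕ} {M : Matrix (Fin n) (Fin n) ℝ} (hH : M.IsHermitian)
    (h : ∀ Z : Matrix (Fin n) (Fin n) ℝ, Z.PosSemidef → 0 ≤ (Z * M).trace) :
    M.PosSemidef := by
  refine PosSemidef.of_dotProduct_mulVec_nonneg hH (fun x => ?_)
  have := h (vecMulVec x x) (psd_vmv x)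
  rw [trace_vmv] at this
  simpa using this

/-- Monotonicity of `P̄` (non-decreasing) and `P̂` (non-increasing) in the Loewner order,
given that each pair `(P̄(μ), P̂(μ))` is trace-optimal for the `μ`-weighted objective. -/
theorem stmt5 {n : ℕ} (Pbar Phat : ℝ → Matrix (Fin n) (Fin n) ℝ)
    (hPbar : ∀ μ ∈ Set.Ioc (0 : ℝ) 1, (Pbar μ).PosSemidef)
    (hPhat : ∀ μ ∈ Set.Ioc (0 : ℝ) 1, (Phat μ).PosSemidef)
    (hopt : ∀ Z : Matrix (Fin n) (Fin n) ℝ, Z.PosSemidef →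
      ∀ μ1 ∈ Set.Ioc (0 : ℝ) 1, ∀ μ2 ∈ Set.Ioc (0 : ℝ) 1,
        (Z * ((1 - μ1) • Pbar μ1 + μ1 • Phat μ1)).trace ≤
          (Z * ((1 - μ1) • Pbar μ2 + μ1 • Phat μ2)).trace)
    (μ1 μ2 : ℝ) (h1 : 0 < μ1) (h12 : μ1 ≤ μ2) (h2 : μ2 ≤ 1) :
    (Pbar μ2 - Pbar μ1).PosSemidef ∧ (Phat μ1 - Phat μ2).PosSemidef := by
  rcases eq_or_lt_of_le h12 with heq | hlt
  · subst heq
    simp only [sub_self]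
    exact ⟨Matrix.PosSemidef.zero, Matrix.PosSemidef.zero⟩
  · have hm1 : μ1 ∈ Set.Ioc (0 : ℝ) 1 := ⟨h1, h12.trans h2⟩
    have hm2 : μ2 ∈ Set.Ioc (0 : ℝ) 1 := ⟨h1.trans hlt, h2⟩
    have key : ∀ Z : Matrix (Fin n) (Fin n) ℝ, Z.PosSemidef →
        0 ≤ (Z * (Pbar μ2 - Pbar μ1)).trace ∧ 0 ≤ (Z * (Phat μ1 - Phat μ2)).trace := by
      intro Z hZ
      have e1 := hopt Z hZ μ1 hm1 μ2 hm2
      have e2 := hopt Z hZ μ2 hm2 μ1 hm1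
      simp only [Matrix.mul_add, Matrix.mul_smul, trace_add, trace_smul, smul_eq_mul] at e1 e2
      rw [Matrix.mul_sub, trace_sub, Matrix.mul_sub, trace_sub]
      constructor
      · nlinarith [e1, e2, h1, hlt, h2]
      · nlinarith [e1, e2, h1, hlt, h2]
    refine ⟨psd_of_trace ((hPbar μ2 hm2).isHermitian.sub (hPbar μ1 hm1).isHermitian)
        (fun Z hZ => (key Z hZ).1),
      psd_of_trace ((hPhat μ1 hm1).isHermitian.sub (hPhat μ2 hm2).isHermitian)
        (fun Z hZ => (key Z hZ).2)⟩
end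

section
/- Let (ε_k)_{k≥0} be a sequence of nonnegative random variables adapted to a filtration, and (x_k) a state process, with ε₀ = e and satisfying γ E[ε_{k+1} | x_k] ≤ ε_k − ‖C x_k‖² for all k ≥ 0, where γ ∈ (0,1). Then, using Chebyshev's bound P{‖C x_k‖ ≥ 1 | x_k measurable information} ≤ E[‖C x_k‖²], the discounted sum of violation probabilities satisfies ∑_{k=0}^∞ γ^k P{‖C x_k‖ ≥ 1} ≤ e. -/
open MeasureTheory Matrix

/-- Closed-loop chance-constraint satisfaction: if `ε₀ = e` and
`γ E[ε_{k+1} | ℱ_k] ≤ ε_k − ‖C x_k‖²` for all `k`, then the discounted sum of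
violation probabilities satisfies `∑_{k=0}^∞ γ^k P{‖C x_k‖ ≥ 1} ≤ e`. -/
theorem stmt7 {Ωs : Type*} {m0 : MeasurableSpace Ωs} (μ : Measure Ωs)
    [IsProbabilityMeasure μ] (ℱ : Filtration ℕ m0)
    {nc nx : ℕ} (C : Matrix (Fin nc) (Fin nx) ℝ)
    (γ : ℝ) (hγ : γ ∈ Set.Ioo (0 : ℝ) 1) (e : ℝ) (he : 0 < e)
    (x : ℕ → Ωs → Fin nx → ℝ) (ε : ℕ → Ωs → ℝ)
    (hxmeas : ∀ k, StronglyMeasurable[ℱ k] (x k))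
    (hεmeas : ∀ k, StronglyMeasurable[ℱ k] (ε k))
    (hεint : ∀ k, Integrable (ε k) μ)
    (hxint : ∀ k, Integrable (fun ω => (C.mulVec (x k ω)) ⬝ᵥ (C.mulVec (x k ω))) μ)
    (hεnn : ∀ k ω, 0 ≤ ε k ω)
    (hε0 : ∀ ω, ε 0 ω = e)
    (hdrift : ∀ k, ∀ᵐ ω ∂μ,
      γ * (μ[ε (k + 1) | ℱ k]) ω ≤
        ε k ω - (C.mulVec (x k ω)) ⬝ᵥ (C.mulVec (x k ω))) :
    ∑' k : ℕ, γ ^ k *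
        (μ {ω | 1 ≤ Real.sqrt ((C.mulVec (x k ω)) ⬝ᵥ (C.mulVec (x k ω)))}).toReal
      ≤ e := by
  obtain ⟨hγ0, hγ1⟩ := hγ
  set v : ℕ → Ωs → ℝ := fun k ω => (C.mulVec (x k ω)) ⬝ᵥ (C.mulVec (x k ω)) with hv
  have hvnn : ∀ k ω, 0 ≤ v k ω := fun k ω =>
    Finset.sum_nonneg fun i _ => mul_self_nonneg _
  set a : ℕ → ℝ := fun k => ∫ ω, ε k ω ∂μ with ha
  set b : ℕ → ℝ := fun k => ∫ ω, v k ω ∂μ with hb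
  have hann : ∀ k, 0 ≤ a k := fun k => integral_nonneg (hεnn k)
  have hbnn : ∀ k, 0 ≤ b k := fun k => integral_nonneg (hvnn k)
  -- integrated drift: γ * a (k+1) ≤ a k - b k
  have hdrift' : ∀ k, γ * a (k + 1) ≤ a k - b k := by
    intro k
    have h1 : ∫ ω, γ * (μ[ε (k + 1) | ℱ k]) ω ∂μ ≤ ∫ ω, (ε k ω - v k ω) ∂μ :=
      integral_mono_ae ((integrable_condExp).const_mul γ)
        ((hεint k).sub (hxint k)) (hdrift k)
    rw [integral_const_mul, integral_condExp (ℱ.le k), integral_sub (hεint k) (hxint k)] at h1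
    exact h1
  have ha0 : a 0 = e := by
    have : a 0 = ∫ _ : Ωs, e ∂μ := by
      apply integral_congr_ae; filter_upwards with ω; exact hε0 ω
    simp [this]
  -- telescoping bound
  have key : ∀ n, ∑ k ∈ Finset.range n, γ ^ k * b k + γ ^ n * a n ≤ e := by
    intro n
    induction n with
    | zero => simp [ha0]
    | succ n ih =>
      have hγn : (0:ℝ) ≤ γ ^ n := pow_nonneg hγ0.le n
      have h2 : γ ^ (n + 1) * a (n + 1) ≤ γ ^ n * (a n - b n) := by
        rw [pow_succ, mul_assoc]
        exact mul_le_mul_of_nonneg_left (hdrift' n) hγn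
      calc ∑ k ∈ Finset.range (n + 1), γ ^ k * b k + γ ^ (n + 1) * a (n + 1)
          ≤ ∑ k ∈ Finset.range n, γ ^ k * b k + γ ^ n * b n + γ ^ n * (a n - b n) := by
            rw [Finset.sum_range_succ]; linarith
        _ = ∑ k ∈ Finset.range n, γ ^ k * b k + γ ^ n * a n := by ring
        _ ≤ e := ih
  have keyb : ∀ n, ∑ k ∈ Finset.range n, γ ^ k * b k ≤ e := by
    intro n
    have := key n
    nlinarith [mul_nonneg (pow_nonneg hγ0.le n) (hann n)]
  -- Markov bound on each probability
  have hmarkov : ∀ k,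
      (μ {ω | 1 ≤ Real.sqrt (v k ω)}).toReal ≤ b k := by
    intro k
    have hset : {ω | 1 ≤ Real.sqrt (v k ω)} = {ω | 1 ≤ v k ω} := by
      ext ω; simp [Real.one_le_sqrt]
    rw [hset]
    have := mul_meas_ge_le_integral_of_nonneg
      (Filter.Eventually.of_forall (hvnn k)) (hxint k) 1
    simpa [Measure.real] using this
  have hterm : ∀ k, γ ^ k * (μ {ω | 1 ≤ Real.sqrt (v k ω)}).toReal ≤ γ ^ k * b k :=
    fun k => mul_le_mul_of_nonneg_left (hmarkov k) (pow_nonneg hγ0.le k)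
  have htermnn : ∀ k, 0 ≤ γ ^ k * (μ {ω | 1 ≤ Real.sqrt (v k ω)}).toReal :=
    fun k => mul_nonneg (pow_nonneg hγ0.le k) ENNReal.toReal_nonneg
  have hsums : ∀ n, ∑ k ∈ Finset.range n,
      γ ^ k * (μ {ω | 1 ≤ Real.sqrt (v k ω)}).toReal ≤ e := by
    intro n
    calc ∑ k ∈ Finset.range n, γ ^ k * (μ {ω | 1 ≤ Real.sqrt (v k ω)}).toReal
        ≤ ∑ k ∈ Finset.range n, γ ^ k * b k := Finset.sum_le_sum fun k _ => hterm k
      _ ≤ e := keyb n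
  exact Summable.tsum_le_of_sum_range_le (summable_of_sum_range_le htermnn hsums) hsums
end
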